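/- Let δ be a real-valued random variable and ε ∈ (0,1). If CVaR_ε(δ) := inf_{α>0} ( (1/ε)·E[(δ + α)_+] − α ) ≤ 0, then P(δ ≤ 0) ≥ 1 − ε. That is, the CVaR constraint is a conservative approximation of the chance constraint. -/

import Mathlib

open MeasureTheory ProbabilityTheory Matrix

/-- CDF of the standard normal distribution. -/
noncomputable def stdCDF (t : ℝ) : ℝ := cdf (gaussianReal 0 1) t

/-- Quantile (inverse CDF) of the standard normal distribution. -/
noncomputable def stdQuantile (p : ℝ) : ℝ := sInf {t : ℝ | p ≤ stdCDF t}

/-- Density of the standard normal distribution. -/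
noncomputable def stdPDF (t : ℝ) : ℝ := Real.exp (-t ^ 2 / 2) / Real.sqrt (2 * Real.pi)

/-- Conditional Value-at-Risk at level ε (Rockafellar–Uryasev form). -/
noncomputable def cvar {Ω : Type*} [MeasurableSpace Ω] (P : Measure Ω) (Z : Ω → ℝ)
    (ε : ℝ) : ℝ := ⨅ α : ℝ, (ε⁻¹ * ∫ ω, max (Z ω + α) 0 ∂P - α)

/-- CVaR constraint (with infimum over α > 0) is a conservative approximation of the
chance constraint. -/
theorem cvar_le_zero_implies_chance {Ω : Type*} [MeasurableSpace Ω] (P : Measure Ω)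
    [IsProbabilityMeasure P] (δ : Ω → ℝ) (hδ : Integrable δ P)
    (ε : ℝ) (hε : 0 < ε) (hε1 : ε < 1)
    (h : sInf {v : ℝ | ∃ α : ℝ, 0 < α ∧ v = ε⁻¹ * ∫ ω, max (δ ω + α) 0 ∂P - α} ≤ 0) :
    (P {ω | δ ω ≤ 0}).toReal ≥ 1 - ε := by
  by_contra hc
  push_neg at hc
  set g := hδ.1.mk δ with hg_def
  have hgm : Measurable g := hδ.1.stronglyMeasurable_mk.measurable
  have hae : δ =ᵐ[P] g := hδ.1.ae_eq_mk
  have hgint : Integrable g P := hδ.congr hae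
  set S : Set Ω := {ω | 0 < g ω} with hS_def
  have hS : MeasurableSet S := measurableSet_lt measurable_const hgm
  have hcompl : {ω | g ω ≤ 0} = Sᶜ := by ext ω; simp [hS_def, not_lt]
  have hPeq : P {ω | δ ω ≤ 0} = P {ω | g ω ≤ 0} :=
    measure_congr (hae.mono fun ω hω => by change (δ ω ≤ 0) = (g ω ≤ 0); rw [hω])
  have hPS : ε < (P S).toReal := by
    have h1 : P Sᶜ = 1 - P S := prob_compl_eq_one_sub hS
    have h2 : (P Sᶜ).toReal = 1 - (P S).toReal := by
      rw [h1, ENNReal.toReal_sub_of_le prob_le_one ENNReal.one_ne_top, ENNReal.toReal_one]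
    rw [hPeq, hcompl, h2] at hc
    linarith
  have hPSpos : 0 < P S := (ENNReal.toReal_pos_iff.mp (hε.trans hPS)).1
  set c : ℝ := ∫ ω in S, g ω ∂P with hc_def
  have hcpos : 0 < c := by
    rw [hc_def]
    rw [setIntegral_pos_iff_support_of_nonneg_ae ?_ hgint.integrableOn]
    · exact lt_of_lt_of_le hPSpos (measure_mono (fun ω hω =>
        ⟨ne_of_gt hω, hω⟩))
    · filter_upwards [ae_restrict_mem hS] with ω hω
      exact le_of_lt hω
  -- key bound for every α > 0
  have key : ∀ α : ℝ, 0 < α → ε⁻¹ * c ≤ ε⁻¹ * ∫ ω, max (δ ω + α) 0 ∂P - α := by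
    intro α hα
    have hint1 : Integrable (fun ω => max (δ ω + α) 0) P :=
      (hδ.add (integrable_const α)).pos_part
    have hint2 : Integrable (S.indicator (fun ω => g ω + α)) P :=
      ((hgint.add (integrable_const α))).indicator hS
    have hle : ∀ ω, S.indicator (fun ω => g ω + α) ω ≤ max (g ω + α) 0 := by
      intro ω
      by_cases hω : ω ∈ S
      · rw [Set.indicator_of_mem hω]; exact le_max_left _ _
      · rw [Set.indicator_of_notMem hω]; exact le_max_right _ _
    have hcongr : ∫ ω, max (δ ω + α) 0 ∂P = ∫ ω, max (g ω + α) 0 ∂P :=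
      integral_congr_ae (hae.mono fun ω hω => by dsimp only; rw [hω])
    have hmono : ∫ ω, S.indicator (fun ω => g ω + α) ω ∂P ≤ ∫ ω, max (g ω + α) 0 ∂P :=
      integral_mono hint2 (hint1.congr (hae.mono fun ω hω => by dsimp only; rw [hω])) hle
    have hval : ∫ ω, S.indicator (fun ω => g ω + α) ω ∂P = c + α * (P S).toReal := by
      rw [integral_indicator hS,
        integral_add hgint.integrableOn (integrable_const α), integral_const,
        measureReal_restrict_apply_univ, smul_eq_mul, measureReal_def]
      ring
    have hmain : c + α * (P S).toReal ≤ ∫ ω, max (δ ω + α) 0 ∂P := by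
      rw [hcongr, ← hval]; exact hmono
    have hεinv : (0:ℝ) < ε⁻¹ := inv_pos.mpr hε
    have h1 : ε⁻¹ * (c + α * (P S).toReal) ≤ ε⁻¹ * ∫ ω, max (δ ω + α) 0 ∂P :=
      mul_le_mul_of_nonneg_left hmain (le_of_lt hεinv)
    have h2 : ε⁻¹ * ε ≤ ε⁻¹ * (P S).toReal :=
      mul_le_mul_of_nonneg_left (le_of_lt hPS) (le_of_lt hεinv)
    rw [inv_mul_cancel₀ (ne_of_gt hε)] at h2
    nlinarith
  have hne : ({v : ℝ | ∃ α : ℝ, 0 < α ∧ v = ε⁻¹ * ∫ ω, max (δ ω + α) 0 ∂P - α}).Nonempty :=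
    ⟨_, 1, one_pos, rfl⟩
  have hlb : ε⁻¹ * c ≤ sInf {v : ℝ | ∃ α : ℝ, 0 < α ∧ v = ε⁻¹ * ∫ ω, max (δ ω + α) 0 ∂P - α} := by
    apply le_csInf hne
    rintro v ⟨α, hα, rfl⟩
    exact key α hα
  have : (0:ℝ) < ε⁻¹ * c := mul_pos (inv_pos.mpr hε) hcpos
  linarith
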